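/- Suppose y* lies in the open positive orthant and satisfies y*_i (Σy*)_i = b_i for every i, and set w = y*/(∑_{j=1}^n y*_j). Then w satisfies the risk budgeting conditions: ∑_{i=1}^n w_i = 1, w_i > 0 for all i, and w_i(Σw)_i = b_i · wᵀΣw for every i ∈ {1,…,n}. -/
import Mathlib


open Matrix Real Finset

/-- **The normalized solution of the convex reformulation solves the risk budgeting problem.**
Suppose `y*` lies in the open positive orthant and satisfies `y*ᵢ (Σy*)ᵢ = bᵢ` for every `i`,
and set `w = y*/(∑ⱼ y*ⱼ)`. Then `∑ᵢ wᵢ = 1`, `wᵢ > 0` for all `i`, and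
`wᵢ(Σw)ᵢ = bᵢ · wᵀΣw` for every `i`. -/
theorem normalized_solution_satisfies_risk_budgeting
    (n : ℕ) (hn : 1 ≤ n) (S : Matrix (Fin n) (Fin n) ℝ) (hS : S.PosDef)
    (b : Fin n → ℝ) (hb : ∀ i, 0 < b i) (hbsum : ∑ i, b i = 1)
    (y : Fin n → ℝ) (hy : ∀ i, 0 < y i)
    (hfoc : ∀ i, y i * S.mulVec y i = b i)
    (w : Fin n → ℝ) (hw : ∀ i, w i = y i / ∑ j, y j) :
    (∑ i, w i = 1) ∧ (∀ i, 0 < w i) ∧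
      ∀ i, w i * S.mulVec w i = b i * (w ⬝ᵥ S.mulVec w) := by
  have hn0 : Nonempty (Fin n) := Fin.pos_iff_nonempty.mp hn
  have hs : 0 < ∑ j, y j := Finset.sum_pos (fun i _ => hy i) Finset.univ_nonempty
  set s := ∑ j, y j with hsdef
  have hwv : w = fun i => y i / s := funext hw
  have hmv : ∀ i, S.mulVec w i = S.mulVec y i / s := by
    intro i
    simp only [hwv, Matrix.mulVec, dotProduct, div_eq_mul_inv, Finset.sum_mul, mul_assoc]
  have hkey : ∀ i, w i * S.mulVec w i = b i / s ^ 2 := by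
    intro i
    rw [hw i, hmv i, div_mul_div_comm, hfoc i, sq]
  have hsumw : ∑ i, w i = 1 := by
    simp only [hwv, ← Finset.sum_div]
    exact div_self hs.ne'
  refine ⟨hsumw, fun i => by rw [hw i]; exact div_pos (hy i) hs, fun i => ?_⟩
  have hquad : w ⬝ᵥ S.mulVec w = 1 / s ^ 2 := by
    simp only [dotProduct]
    rw [Finset.sum_congr rfl (fun i _ => hkey i), ← Finset.sum_div, hbsum, one_div]
  rw [hkey i, hquad]
  ring
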